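/- Let M be a discrete valuation field, ν_{i,j} rationals with ν_{i,j} ≥ ν_{i,l} + ν_{l,j} for i < l < j, X = (x_{i,j}) ∈ H_{≤ν} and Y ∈ H_{<ν}. Writing XY = (z_{i,j}) and YX = (z'_{i,j}), one has v_M(z_{i,j} - x_{i,j}) > -ν_{i,j} and v_M(z'_{i,j} - x_{i,j}) > -ν_{i,j} for all 1 ≤ i < j ≤ n. -/
import Mathlib


/-- The valuation of an element, viewed with rational values. -/
noncomputable def vQ {M : Type*} [Field M] (v : AddValuation M (WithTop ℤ)) (x : M) :
    WithTop ℚ :=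
  WithTop.map (fun z : ℤ => (z : ℚ)) (v x)

/-- Unipotent upper triangular matrix. -/
def IsUnitri {n : ℕ} {M : Type*} [Field M] (X : Matrix (Fin n) (Fin n) M) : Prop :=
  (∀ i j : Fin n, j < i → X i j = 0) ∧ ∀ i : Fin n, X i i = 1

/-- Membership in `H_{≤ν}`. -/
def MemHle {n : ℕ} {M : Type*} [Field M] (v : AddValuation M (WithTop ℤ))
    (ν : Fin n → Fin n → ℚ) (X : Matrix (Fin n) (Fin n) M) : Prop :=
  IsUnitri X ∧ ∀ i j : Fin n, i < j → ((-ν i j : ℚ) : WithTop ℚ) ≤ vQ v (X i j)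

/-- Membership in `H_{<ν}`. -/
def MemHlt {n : ℕ} {M : Type*} [Field M] (v : AddValuation M (WithTop ℤ))
    (ν : Fin n → Fin n → ℚ) (X : Matrix (Fin n) (Fin n) M) : Prop :=
  IsUnitri X ∧ ∀ i j : Fin n, i < j → ((-ν i j : ℚ) : WithTop ℚ) < vQ v (X i j)

lemma mapQ_mono : Monotone (WithTop.map (fun z : ℤ => (z : ℚ))) :=
  Int.cast_mono.withTop_map

lemma mapQ_add (x y : WithTop ℤ) :
    WithTop.map (fun z : ℤ => (z : ℚ)) (x + y) =
      WithTop.map (fun z : ℤ => (z : ℚ)) x + WithTop.map (fun z : ℤ => (z : ℚ)) y := by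
  cases x using WithTop.recTopCoe <;> cases y using WithTop.recTopCoe <;>
    simp [← WithTop.coe_add]

lemma vQ_mul {M : Type*} [Field M] (v : AddValuation M (WithTop ℤ)) (a b : M) :
    vQ v (a * b) = vQ v a + vQ v b := by
  simp [vQ, v.map_mul, mapQ_add]

lemma vQ_zero {M : Type*} [Field M] (v : AddValuation M (WithTop ℤ)) : vQ v 0 = ⊤ := by
  simp [vQ, v.map_zero]

lemma vQ_one {M : Type*} [Field M] (v : AddValuation M (WithTop ℤ)) : vQ v 1 = 0 := by
  simp [vQ, v.map_one]

lemma lt_vQ_add {M : Type*} [Field M] (v : AddValuation M (WithTop ℤ)) {a b : M}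
    {c : WithTop ℚ} (ha : c < vQ v a) (hb : c < vQ v b) : c < vQ v (a + b) := by
  have h := v.map_add a b
  have h2 : min (vQ v a) (vQ v b) ≤ vQ v (a + b) := by
    have := mapQ_mono h
    rwa [mapQ_mono.map_min] at this
  exact lt_of_lt_of_le (lt_min ha hb) h2

lemma lt_vQ_sum {M : Type*} [Field M] (v : AddValuation M (WithTop ℤ)) {ι : Type*}
    {s : Finset ι} {f : ι → M} {c : ℚ}
    (h : ∀ t ∈ s, (c : WithTop ℚ) < vQ v (f t)) :
    (c : WithTop ℚ) < vQ v (∑ t ∈ s, f t) := by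
  induction s using Finset.cons_induction with
  | empty => simp [vQ_zero]
  | cons a s ha ih =>
      rw [Finset.sum_cons]
      exact lt_vQ_add v (h a (Finset.mem_cons_self a s))
        (ih fun t ht => h t (Finset.mem_cons_of_mem ht))

lemma sum_decomp {n : ℕ} {M : Type*} [Field M] {i j : Fin n} (hij : i < j)
    (f : Fin n → M) (h0 : ∀ l, l < i ∨ j < l → f l = 0) :
    ∑ l, f l = f i + f j + ∑ l ∈ Finset.Ioo i j, f l := by
  have h1 : ∑ l, f l = ∑ l ∈ Finset.Icc i j, f l := by
    refine (Finset.sum_subset (Finset.subset_univ _) fun x _ hx => ?_).symm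
    rw [Finset.mem_Icc, not_and_or] at hx
    exact h0 x (by rcases hx with h | h <;> [left; right] <;> omega)
  rw [h1, Finset.Icc_eq_cons_Ioc hij.le, Finset.sum_cons,
    Finset.Ioc_eq_cons_Ioo hij, Finset.sum_cons]
  ring


/-- For `X ∈ H_{≤ν}` and `Y ∈ H_{<ν}`, the entries of `XY` and of `YX`
agree with those of `X` modulo elements of valuation `> -ν_{i,j}`, i.e.
`v_M((XY)_{i,j} - x_{i,j}) > -ν_{i,j}` and `v_M((YX)_{i,j} - x_{i,j}) > -ν_{i,j}`. -/
theorem mul_entry_congr {n : ℕ} {M : Type*} [Field M]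
    (v : AddValuation M (WithTop ℤ)) (ν : Fin n → Fin n → ℚ)
    (hν : ∀ i l j : Fin n, i < l → l < j → ν i l + ν l j ≤ ν i j)
    (X Y : Matrix (Fin n) (Fin n) M) (hX : MemHle v ν X) (hY : MemHlt v ν Y) :
    ∀ i j : Fin n, i < j →
      ((-ν i j : ℚ) : WithTop ℚ) < vQ v ((X * Y) i j - X i j) ∧
      ((-ν i j : ℚ) : WithTop ℚ) < vQ v ((Y * X) i j - X i j) := by
  intro i j hij
  obtain ⟨⟨hXlow, hXdiag⟩, hXv⟩ := hX
  obtain ⟨⟨hYlow, hYdiag⟩, hYv⟩ := hY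
  have hmid : ∀ l : Fin n, l ∈ Finset.Ioo i j →
      (((-ν i j : ℚ)) : WithTop ℚ) < vQ v (X i l) + vQ v (Y l j) := by
    intro l hl
    rw [Finset.mem_Ioo] at hl
    obtain ⟨h1, h2⟩ := hl
    calc ((-ν i j : ℚ) : WithTop ℚ) ≤ ((-(ν i l + ν l j) : ℚ) : WithTop ℚ) := by
          exact_mod_cast neg_le_neg (hν i l j h1 h2)
      _ = ((-ν i l : ℚ) : WithTop ℚ) + ((-ν l j : ℚ) : WithTop ℚ) := by
          rw [show -(ν i l + ν l j) = -ν i l + -ν l j by ring, WithTop.coe_add]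
      _ < vQ v (X i l) + vQ v (Y l j) :=
          WithTop.add_lt_add_of_le_of_lt WithTop.coe_ne_top (hXv i l h1) (hYv l j h2)
  have hmid' : ∀ l : Fin n, l ∈ Finset.Ioo i j →
      (((-ν i j : ℚ)) : WithTop ℚ) < vQ v (Y i l) + vQ v (X l j) := by
    intro l hl
    rw [Finset.mem_Ioo] at hl
    obtain ⟨h1, h2⟩ := hl
    calc ((-ν i j : ℚ) : WithTop ℚ) ≤ ((-(ν i l + ν l j) : ℚ) : WithTop ℚ) := by
          exact_mod_cast neg_le_neg (hν i l j h1 h2)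
      _ = ((-ν i l : ℚ) : WithTop ℚ) + ((-ν l j : ℚ) : WithTop ℚ) := by
          rw [show -(ν i l + ν l j) = -ν i l + -ν l j by ring, WithTop.coe_add]
      _ < vQ v (Y i l) + vQ v (X l j) :=
          WithTop.add_lt_add_of_lt_of_le WithTop.coe_ne_top (hYv i l h1) (hXv l j h2)
  constructor
  · have hdec : (X * Y) i j = X i i * Y i j + X i j * Y j j
        + ∑ l ∈ Finset.Ioo i j, X i l * Y l j := by
      rw [Matrix.mul_apply]
      exact sum_decomp hij _ fun l hl => by
        rcases hl with h | h
        · rw [hXlow i l h, zero_mul]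
        · rw [hYlow l j h, mul_zero]
    rw [hdec, hXdiag, hYdiag, one_mul, mul_one,
      show Y i j + X i j + (∑ l ∈ Finset.Ioo i j, X i l * Y l j) - X i j
        = Y i j + ∑ l ∈ Finset.Ioo i j, X i l * Y l j from by ring]
    exact lt_vQ_add v (hYv i j hij)
      (lt_vQ_sum v fun l hl => by rw [vQ_mul]; exact hmid l hl)
  · have hdec : (Y * X) i j = Y i i * X i j + Y i j * X j j
        + ∑ l ∈ Finset.Ioo i j, Y i l * X l j := by
      rw [Matrix.mul_apply]
      exact sum_decomp hij _ fun l hl => by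
        rcases hl with h | h
        · rw [hYlow i l h, zero_mul]
        · rw [hXlow l j h, mul_zero]
    rw [hdec, hYdiag, hXdiag, one_mul, mul_one,
      show X i j + Y i j + (∑ l ∈ Finset.Ioo i j, Y i l * X l j) - X i j
        = Y i j + ∑ l ∈ Finset.Ioo i j, Y i l * X l j from by ring]
    exact lt_vQ_add v (hYv i j hij)
      (lt_vQ_sum v fun l hl => by rw [vQ_mul]; exact hmid' l hl)
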